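/- Let C(s) := Σ_{j∈ℕ} ⟨k⟩^{2s} / (⟨k-j⟩^{2s} ⟨j⟩^{2s}), where ⟨m⟩ := max(1,|m|). For s > 1/2, this sum is bounded uniformly in k ∈ ℕ: there is a constant C depending only on s with Σ_{j∈ℕ} ⟨k⟩^{2s} / (⟨k-j⟩^{2s} ⟨j⟩^{2s}) ≤ C for all k. -/

import Mathlib

/-- Uniform bound in `k` for the convolution-type sum
`Σ_j ⟨k⟩^{2s} / (⟨k-j⟩^{2s} ⟨j⟩^{2s})` when `s > 1/2`. -/
theorem convolution_weight_sum_bounded (s : ℝ) (hs : 1 / 2 < s) :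
    ∃ C : ℝ, ∀ k : ℕ,
      (∑' j : ℕ,
        (max 1 |((k : ℝ))|) ^ (2 * s) /
          ((max 1 |(((k : ℤ) - (j : ℤ) : ℤ) : ℝ)|) ^ (2 * s) *
            (max 1 |((j : ℝ))|) ^ (2 * s))) ≤ C := by
  have hps : (0:ℝ) < 2 * s := by linarith
  set p := 2 * s with hp
  set w : ℤ → ℝ := fun m => (max 1 |(m:ℝ)|) ^ p with hw
  have hbase : ∀ m : ℤ, (1:ℝ) ≤ max 1 |(m:ℝ)| := fun m => le_max_left _ _
  have hw1 : ∀ m : ℤ, (1:ℝ) ≤ w m := fun m => Real.one_le_rpow (hbase m) hps.le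
  have hwpos : ∀ m : ℤ, 0 < w m := fun m => lt_of_lt_of_le one_pos (hw1 m)
  -- summability of 1/w over ℤ
  have hf : Summable (fun m : ℤ => (w m)⁻¹) := by
    have h := Real.summable_abs_int_rpow (show 1 < p by linarith)
    refine h.congr_cofinite ?_
    have : ({(0:ℤ)} : Set ℤ).Finite := Set.finite_singleton _
    filter_upwards [this.compl_mem_cofinite] with m hm
    have hm0 : m ≠ 0 := by simpa using hm
    have habs : (1:ℝ) ≤ |(m:ℝ)| := by
      have : (1:ℤ) ≤ |m| := Int.one_le_abs hm0
      calc (1:ℝ) = ((1:ℤ):ℝ) := by norm_num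
        _ ≤ (|m| : ℝ) := by exact_mod_cast this
        _ = |(m:ℝ)| := by norm_cast
    have hmax : max 1 |(m:ℝ)| = |(m:ℝ)| := max_eq_right habs
    have hpos : (0:ℝ) < |(m:ℝ)| := lt_of_lt_of_le one_pos habs
    simp only [hw, hmax]
    rw [← Real.rpow_neg hpos.le]
  set S := ∑' m : ℤ, (w m)⁻¹ with hS
  refine ⟨(2:ℝ)^p * (S + S), fun k => ?_⟩
  -- the term of the series
  set t : ℕ → ℝ := fun j =>
    (max 1 |((k : ℝ))|) ^ p /
      ((max 1 |(((k : ℤ) - (j : ℤ) : ℤ) : ℝ)|) ^ p * (max 1 |((j : ℝ))|) ^ p) with ht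
  have hteq : ∀ j : ℕ, t j = w k / (w ((k:ℤ) - j) * w j) := by
    intro j
    simp only [ht, hw]
    norm_num
  set g : ℕ → ℝ := fun j => (2:ℝ)^p * ((w ((k:ℤ) - j))⁻¹ + (w (j:ℤ))⁻¹) with hg
  have hinj1 : Function.Injective (fun j : ℕ => (k:ℤ) - j) := by
    intro a b h; simp only at h; omega
  have hg1 : Summable (fun j : ℕ => (w ((k:ℤ) - j))⁻¹) := hf.comp_injective hinj1
  have hg2 : Summable (fun j : ℕ => (w (j:ℤ))⁻¹) := hf.comp_injective Nat.cast_injective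
  have hgsum : Summable g := ((hg1.add hg2).mul_left _)
  -- key pointwise bound
  have hle : ∀ j : ℕ, t j ≤ g j := by
    intro j
    rw [hteq j]
    have hd : 0 < w ((k:ℤ) - j) * w j := mul_pos (hwpos _) (hwpos _)
    rw [div_le_iff₀ hd]
    have key : w (k:ℤ) ≤ (2:ℝ)^p * (w ((k:ℤ) - j) + w (j:ℤ)) := by
      have habs : |((k:ℤ):ℝ)| ≤ |(((k:ℤ) - j : ℤ):ℝ)| + |((j:ℤ):ℝ)| := by
        have : ((k:ℤ):ℝ) = (((k:ℤ) - j : ℤ):ℝ) + ((j:ℤ):ℝ) := by push_cast; ring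
        rw [this]; exact abs_add_le _ _
      set A := max 1 |(((k:ℤ) - j : ℤ):ℝ)| with hA
      set B := max 1 |((j:ℤ):ℝ)| with hB
      have hAB : max 1 |((k:ℤ):ℝ)| ≤ 2 * max A B := by
        have h1 : (1:ℝ) ≤ max A B := le_trans (le_max_left _ _) (le_max_left _ _)
        have h2 : |((k:ℤ):ℝ)| ≤ 2 * max A B := by
          calc |((k:ℤ):ℝ)| ≤ |(((k:ℤ) - j : ℤ):ℝ)| + |((j:ℤ):ℝ)| := habs
            _ ≤ A + B := add_le_add (le_max_right _ _) (le_max_right _ _)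
            _ ≤ max A B + max A B := add_le_add (le_max_left _ _) (le_max_right _ _)
            _ = 2 * max A B := by ring
        exact max_le (by linarith) h2
      have hmono : (max 1 |((k:ℤ):ℝ)|) ^ p ≤ (2 * max A B) ^ p :=
        Real.rpow_le_rpow (le_trans zero_le_one (hbase _)) hAB hps.le
      have hsplit : (2 * max A B) ^ p = (2:ℝ)^p * (max A B) ^ p :=
        Real.mul_rpow (by norm_num) (le_trans zero_le_one (le_trans (le_max_left _ _) (le_max_left _ _)))
      have hmaxp : (max A B) ^ p ≤ A ^ p + B ^ p := by
        rcases max_cases A B with ⟨h, _⟩ | ⟨h, _⟩ <;> rw [h]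
        · have : (0:ℝ) ≤ B ^ p := Real.rpow_nonneg (le_trans zero_le_one (le_max_left _ _)) _
          linarith
        · have : (0:ℝ) ≤ A ^ p := Real.rpow_nonneg (le_trans zero_le_one (le_max_left _ _)) _
          linarith
      calc w (k:ℤ) = (max 1 |((k:ℤ):ℝ)|) ^ p := rfl
        _ ≤ (2:ℝ)^p * (max A B) ^ p := by rw [← hsplit]; exact hmono
        _ ≤ (2:ℝ)^p * (A ^ p + B ^ p) := by
            have h2p : (0:ℝ) ≤ (2:ℝ)^p := Real.rpow_nonneg (by norm_num) _
            exact mul_le_mul_of_nonneg_left hmaxp h2p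
        _ = (2:ℝ)^p * (w ((k:ℤ) - j) + w (j:ℤ)) := rfl
    have heq : g j * (w ((k:ℤ) - j) * w j) = (2:ℝ)^p * (w (j:ℤ) + w ((k:ℤ) - j)) := by
      simp only [hg]
      field_simp [(hwpos ((k:ℤ) - j)).ne', (hwpos (j:ℤ)).ne']
    rw [heq]
    calc w (k:ℤ) ≤ (2:ℝ)^p * (w ((k:ℤ) - j) + w (j:ℤ)) := key
      _ = (2:ℝ)^p * (w (j:ℤ) + w ((k:ℤ) - j)) := by ring
  have htnonneg : ∀ j : ℕ, 0 ≤ t j := by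
    intro j
    rw [hteq j]
    exact div_nonneg (hwpos _).le (mul_pos (hwpos _) (hwpos _)).le
  have htsum : Summable t := Summable.of_nonneg_of_le htnonneg hle hgsum
  have hfnonneg : ∀ m : ℤ, 0 ≤ (w m)⁻¹ := fun m => (inv_pos.mpr (hwpos m)).le
  calc (∑' j : ℕ, t j) ≤ ∑' j : ℕ, g j := Summable.tsum_le_tsum hle htsum hgsum
    _ = (2:ℝ)^p * ((∑' j : ℕ, (w ((k:ℤ) - j))⁻¹) + ∑' j : ℕ, (w (j:ℤ))⁻¹) := by
        rw [tsum_mul_left, Summable.tsum_add hg1 hg2]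
    _ ≤ (2:ℝ)^p * (S + S) := by
        have h2p : (0:ℝ) ≤ (2:ℝ)^p := Real.rpow_nonneg (by norm_num) _
        refine mul_le_mul_of_nonneg_left (add_le_add ?_ ?_) h2p
        · exact Summable.tsum_le_tsum_of_inj _ hinj1 (fun c _ => hfnonneg c) (fun j => le_rfl) hg1 hf
        · exact Summable.tsum_le_tsum_of_inj _ Nat.cast_injective (fun c _ => hfnonneg c)
            (fun j => le_rfl) hg2 hf
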